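/- Let R be a commutative ring, q ∈ R, I a finite set, and let 𝓕 be any set of set compositions of I. Define h : ℕ → R by h(n) = Σ q^{w(f)}, the sum over all functions f : I → Fin n whose level-set composition comp(f) belongs to 𝓕, where w(f) = Σ_{i ∈ I} f(i) (values in Fin n viewed as natural numbers). Then 𝔇_{|I|} h = 0; that is, h is a Gaussian polynomial function of degree at most |I|. -/

import Mathlib

/-- The level-set composition of `f : I → α`: the list of preimages of the distinct
values attained by `f`, listed in increasing order of the values. -/
def levelComp {I : Type*} [Fintype I] [DecidableEq I] {α : Type*} [LinearOrder α]
    (f : I → α) : List (Finset I) :=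
  ((Finset.univ.image f).sort (· ≤ ·)).map fun v => Finset.univ.filter fun i => f i = v

/-- The operator `(D_j f)(n) = f(n+1) − q^j·f(n)`. -/
def Dop {R : Type*} [CommRing R] (q : R) (j : ℕ) (f : ℕ → R) : ℕ → R :=
  fun n => f (n + 1) - q ^ j * f n

/-- The operator `𝔇_d = D_0 ∘ D_1 ∘ ⋯ ∘ D_d`; a function `f : ℕ → R` is a Gaussian
polynomial function of degree at most `d` if `𝔇_d f = 0`. -/
def Dfull {R : Type*} [CommRing R] (q : R) : ℕ → (ℕ → R) → (ℕ → R)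
  | 0 => Dop q 0
  | d + 1 => Dfull q d ∘ Dop q (d + 1)

section Aux

open scoped Classical

variable {R : Type*} [CommRing R] (q : R)

lemma Dop_comm (i j : ℕ) (f : ℕ → R) : Dop q i (Dop q j f) = Dop q j (Dop q i f) := by
  funext n; simp only [Dop]; ring

lemma Dfull_Dop (d j : ℕ) (f : ℕ → R) :
    Dfull q d (Dop q j f) = Dop q j (Dfull q d f) := by
  induction d generalizing f with
  | zero => exact Dop_comm q 0 j f
  | succ d ih =>
    show Dfull q d (Dop q (d+1) (Dop q j f)) = _
    rw [Dop_comm, ih]; rfl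

lemma Dop_zero (j : ℕ) : Dop q j (0 : ℕ → R) = 0 := by
  funext n; simp [Dop]

lemma Dfull_mono (d : ℕ) (f : ℕ → R) (h : Dfull q d f = 0) :
    Dfull q (d + 1) f = 0 := by
  show Dfull q d (Dop q (d+1) f) = 0
  rw [Dfull_Dop, h, Dop_zero]

lemma Dfull_mono' {d e : ℕ} (hde : d ≤ e) (f : ℕ → R) (h : Dfull q d f = 0) :
    Dfull q e f = 0 := by
  induction e with
  | zero => exact (Nat.le_zero.mp hde) ▸ h
  | succ e ih =>
    rcases Nat.lt_or_ge d (e+1) with h' | h'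
    · exact Dfull_mono q e f (ih (by omega))
    · have : d = e + 1 := by omega
      exact this ▸ h

lemma Dop_smul (j : ℕ) (a : R) (f : ℕ → R) :
    Dop q j (fun n => a * f n) = fun n => a * Dop q j f n := by
  funext n; simp only [Dop]; ring

lemma Dfull_smul (d : ℕ) (a : R) (f : ℕ → R) :
    Dfull q d (fun n => a * f n) = fun n => a * Dfull q d f n := by
  induction d generalizing f with
  | zero => exact Dop_smul q 0 a f
  | succ d ih =>
    show Dfull q d (Dop q (d+1) fun n => a * f n) = _
    rw [Dop_smul, ih]; rfl

lemma Dop_add (j : ℕ) (f g : ℕ → R) :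
    Dop q j (fun n => f n + g n) = fun n => Dop q j f n + Dop q j g n := by
  funext n; simp only [Dop]; ring

lemma Dfull_add (d : ℕ) (f g : ℕ → R) :
    Dfull q d (fun n => f n + g n) = fun n => Dfull q d f n + Dfull q d g n := by
  induction d generalizing f g with
  | zero => exact Dop_add q 0 f g
  | succ d ih =>
    show Dfull q d (Dop q (d+1) fun n => f n + g n) = _
    rw [Dop_add, ih]; rfl

lemma Dfull_const (d : ℕ) (a : R) : Dfull q d (fun _ => a) = 0 := by
  induction d generalizing a with
  | zero => funext n; simp [Dfull, Dop]
  | succ d ih =>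
    show Dfull q d (Dop q (d+1) fun _ => a) = 0
    have : Dop q (d+1) (fun _ => a) = fun _ => (a - q^(d+1) * a) := by
      funext n; simp [Dop]
    rw [this, ih]

lemma Dfull_sum {ι : Type*} (d : ℕ) (s : Finset ι) (F : ι → ℕ → R) :
    Dfull q d (fun n => ∑ C ∈ s, F C n) = fun n => ∑ C ∈ s, Dfull q d (F C) n := by
  induction s using Finset.induction with
  | empty => simp only [Finset.sum_empty]; exact Dfull_const q d 0
  | insert _ _ hx ih =>
    rename_i a s
    simp only [Finset.sum_insert hx]
    rw [Dfull_add, ih]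

/-- Sum of `q^(weighted sum)` over strictly monotone tuples. -/
noncomputable def Gsum {R : Type*} [CommRing R] (q : R) {k : ℕ} (c : Fin k → ℕ) (n : ℕ) : R :=
  ∑ h ∈ Finset.univ.filter (fun h : Fin k → Fin n => StrictMono h), q ^ ∑ j, c j * (h j : ℕ)

lemma Gsum_nil (n : ℕ) (c : Fin 0 → ℕ) : Gsum q c n = 1 := by
  have huniv : ∀ h : Fin 0 → Fin n, StrictMono h := fun h a b _ => a.elim0
  rw [Gsum, Finset.filter_true_of_mem (fun h _ => huniv h)]
  simp

private lemma hne0' {n k : ℕ} {h : Fin (k + 1) → Fin (n + 1)} (hm : StrictMono h)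
    (h0 : h 0 = 0) (j : Fin k) : h j.succ ≠ 0 := fun hj => by
  have := hm (Fin.succ_pos j)
  rw [h0, hj] at this
  exact lt_irrefl _ this

private lemma hne0 {n k : ℕ} {h : Fin (k + 1) → Fin (n + 1)} (hm : StrictMono h)
    (h0 : h 0 ≠ 0) (j : Fin (k + 1)) : h j ≠ 0 :=
  fun hj => h0 (Fin.le_zero_iff.mp (hj ▸ hm.monotone (Fin.zero_le j)))

lemma Gsum_rec {k : ℕ} (c : Fin (k + 1) → ℕ) :
    Dop q (∑ j, c j) (Gsum q c) =
      fun n => q ^ (∑ j : Fin k, c j.succ) * Gsum q (fun j => c j.succ) n := by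
  funext n
  show Gsum q c (n + 1) - q ^ (∑ j, c j) * Gsum q c n = _
  have split : Gsum q c (n + 1) =
      (∑ h ∈ Finset.univ.filter
          (fun h : Fin (k+1) → Fin (n+1) => StrictMono h ∧ h 0 = 0), q ^ ∑ j, c j * (h j : ℕ))
      + ∑ h ∈ Finset.univ.filter
          (fun h : Fin (k+1) → Fin (n+1) => StrictMono h ∧ h 0 ≠ 0), q ^ ∑ j, c j * (h j : ℕ) := by
    rw [Gsum, ← Finset.sum_filter_add_sum_filter_not
        (Finset.univ.filter (fun h : Fin (k+1) → Fin (n+1) => StrictMono h)) (fun h => h 0 = 0)]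
    congr 1 <;> · congr 1; rw [Finset.filter_filter]
  have claimA : (∑ h ∈ Finset.univ.filter
      (fun h : Fin (k+1) → Fin (n+1) => StrictMono h ∧ h 0 ≠ 0), q ^ ∑ j, c j * (h j : ℕ))
      = q ^ (∑ j, c j) * Gsum q c n := by
    rw [Gsum, Finset.mul_sum]
    refine Finset.sum_bij'
      (i := fun h hh => fun j => (h j).pred
        (hne0 (Finset.mem_filter.mp hh).2.1 (Finset.mem_filter.mp hh).2.2 j))
      (j := fun g _ => fun j => (g j).succ) ?_ ?_ ?_ ?_ ?_
    · intro h hh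
      simp only [Finset.mem_filter, Finset.mem_univ, true_and] at hh ⊢
      exact Fin.strictMono_pred_comp _ hh.1
    · intro g hg
      simp only [Finset.mem_filter, Finset.mem_univ, true_and] at hg ⊢
      exact ⟨fun a b hab => Fin.succ_lt_succ_iff.mpr (hg hab), Fin.succ_ne_zero _⟩
    · intro h hh; funext j; simp
    · intro g hg; funext j; simp
    · intro h hh
      obtain ⟨-, hm, h0⟩ := Finset.mem_filter.mp hh
      rw [← pow_add]
      congr 1
      simp only [Fin.coe_pred]
      rw [← Finset.sum_add_distrib]
      refine Finset.sum_congr rfl fun j _ => ?_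
      have h1 : 1 ≤ (h j : ℕ) := Nat.one_le_iff_ne_zero.mpr
        (fun e => hne0 hm h0 j (Fin.ext (by simp [e])))
      have e : (h j : ℕ) = ((h j : ℕ) - 1) + 1 := by omega
      calc c j * (h j : ℕ) = c j * (((h j : ℕ) - 1) + 1) := by rw [← e]
        _ = c j + c j * ((h j : ℕ) - 1) := by ring
  have claimB : (∑ h ∈ Finset.univ.filter
      (fun h : Fin (k+1) → Fin (n+1) => StrictMono h ∧ h 0 = 0), q ^ ∑ j, c j * (h j : ℕ))
      = q ^ (∑ j : Fin k, c j.succ) * Gsum q (fun j => c j.succ) n := by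
    rw [Gsum, Finset.mul_sum]
    refine Finset.sum_bij'
      (i := fun h hh => fun j => (h j.succ).pred
        (hne0' (Finset.mem_filter.mp hh).2.1 (Finset.mem_filter.mp hh).2.2 j))
      (j := fun g _ => Fin.cons 0 (fun j => (g j).succ)) ?_ ?_ ?_ ?_ ?_
    · intro h hh
      simp only [Finset.mem_filter, Finset.mem_univ, true_and] at hh ⊢
      exact Fin.strictMono_pred_comp _ (fun a b hab => hh.1 (Fin.succ_lt_succ_iff.mpr hab))
    · intro g hg
      simp only [Finset.mem_filter, Finset.mem_univ, true_and] at hg ⊢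
      constructor
      · intro a b hab
        induction a using Fin.cases with
        | zero =>
          induction b using Fin.cases with
          | zero => exact absurd hab (lt_irrefl _)
          | succ j => simpa using Fin.succ_pos (g j)
        | succ i =>
          induction b using Fin.cases with
          | zero => exact absurd hab (by simp [Fin.le_zero_iff, not_lt, Fin.zero_le])
          | succ j =>
            simp only [Fin.cons_succ]
            exact Fin.succ_lt_succ_iff.mpr (hg (Fin.succ_lt_succ_iff.mp hab))
      · simp
    · intro h hh
      obtain ⟨-, hm, h0⟩ := Finset.mem_filter.mp hh
      funext j
      induction j using Fin.cases with
      | zero => simp [h0]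
      | succ j => simp
    · intro g hg; funext j; simp
    · intro h hh
      obtain ⟨-, hm, h0⟩ := Finset.mem_filter.mp hh
      rw [← pow_add]
      congr 1
      rw [Fin.sum_univ_succ]; simp only [h0]
      simp only [Fin.val_zero, Nat.mul_zero, Nat.zero_add, Fin.coe_pred]
      rw [← Finset.sum_add_distrib]
      refine Finset.sum_congr rfl fun j _ => ?_
      have h1 : 1 ≤ (h j.succ : ℕ) := by
        have : (0 : Fin (n+1)) < h j.succ := h0 ▸ hm (Fin.succ_pos j)
        exact Fin.lt_def.mp this
      have e : (h j.succ : ℕ) = ((h j.succ : ℕ) - 1) + 1 := by omega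
      calc c j.succ * (h j.succ : ℕ) = c j.succ * (((h j.succ : ℕ) - 1) + 1) := by rw [← e]
        _ = c j.succ + c j.succ * ((h j.succ : ℕ) - 1) := by ring
  rw [split, claimA, claimB]
  ring

lemma Dfull_Gsum {k : ℕ} (c : Fin k → ℕ) (hc : ∀ j, 1 ≤ c j) {d : ℕ}
    (hd : (∑ j, c j) ≤ d) : Dfull q d (Gsum q c) = 0 := by
  induction k generalizing d with
  | zero =>
    have : Gsum q c = fun _ => (1 : R) := funext fun n => Gsum_nil q n c
    rw [this]
    exact Dfull_const q d 1
  | succ k ih =>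
    refine Dfull_mono' q hd _ ?_
    have hm : ∑ j, c j = (∑ j, c j - 1) + 1 := by
      have : 1 ≤ ∑ j, c j := le_trans (hc 0) (Finset.single_le_sum (f := fun j => c j)
        (fun _ _ => Nat.zero_le _) (Finset.mem_univ 0))
      omega
    rw [hm]
    show Dfull q (∑ j, c j - 1) (Dop q ((∑ j, c j - 1) + 1) (Gsum q c)) = 0
    rw [← hm, Gsum_rec q c, Dfull_smul]
    have : Dfull q (∑ j, c j - 1) (Gsum q fun j => c j.succ) = 0 := by
      refine ih (fun j => c j.succ) (fun j => hc j.succ) ?_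
      show (∑ j : Fin k, c j.succ) ≤ ∑ j, c j - 1
      have : ∑ j, c j = c 0 + ∑ j : Fin k, c j.succ := Fin.sum_univ_succ c
      have h0 := hc 0
      omega
    rw [this]
    funext n
    simp

lemma sort_image_ofFn {n k : ℕ} {h : Fin k → Fin n} (hm : StrictMono h) :
    (Finset.image h Finset.univ).sort (· ≤ ·) = List.ofFn h := by
  refine (fun hp h1 h2 => List.Perm.eq_of_pairwise' (r := (· ≤ ·)) h1 h2 hp) ?_ ?_ ?_
  · apply List.perm_of_nodup_nodup_toFinset_eq
    · exact Finset.sort_nodup _ _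
    · exact List.nodup_ofFn.mpr hm.injective
    · rw [Finset.sort_toFinset, Fin.univ_image_def]
  · exact Finset.pairwise_sort _ _
  · exact (List.sortedLT_ofFn_iff.mpr hm).sortedLE.pairwise

variable {I : Type*} [Fintype I] [DecidableEq I]

lemma levelComp_comp {n k : ℕ} {h : Fin k → Fin n} (hm : StrictMono h)
    {idx : I → Fin k} (hs : Function.Surjective idx) :
    levelComp (fun i => h (idx i))
      = List.ofFn (fun j => Finset.univ.filter fun i => idx i = j) := by
  have himg : ∀ (inst : DecidableEq (Fin n)),
      @Finset.image _ _ inst (fun i => h (idx i)) Finset.univ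
        = @Finset.image _ _ inst h Finset.univ := by
    intro inst
    ext v
    simp only [Finset.mem_image, Finset.mem_univ, true_and]
    constructor
    · rintro ⟨i, rfl⟩; exact ⟨idx i, rfl⟩
    · rintro ⟨j, rfl⟩; obtain ⟨i, rfl⟩ := hs j; exact ⟨i, rfl⟩
  have key : List.map (fun v => Finset.univ.filter fun i => h (idx i) = v)
      ((Finset.univ.image h).sort (· ≤ ·))
      = List.ofFn fun j => Finset.univ.filter fun i => idx i = j := by
    rw [sort_image_ofFn hm, List.map_ofFn]
    refine congrArg _ (funext fun j => ?_)
    show Finset.univ.filter (fun i => h (idx i) = h j) = _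
    refine Finset.filter_congr fun i _ => ?_
    simp [hm.injective.eq_iff]
  rw [levelComp, himg _]
  refine Eq.trans ?_ key
  congr!

lemma exists_decomp {n : ℕ} (f : I → Fin n) :
    ∃ (k : ℕ) (_ : k ≤ Fintype.card I) (idx : I → Fin k) (h : Fin k → Fin n),
      Function.Surjective idx ∧ StrictMono h ∧ f = fun i => h (idx i) := by
  refine ⟨(Finset.univ.image f).card, ?_, ?_⟩
  · calc (Finset.univ.image f).card ≤ (Finset.univ : Finset I).card := Finset.card_image_le
      _ = Fintype.card I := Finset.card_univ
  · set S := Finset.univ.image f with hS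
    refine ⟨fun i => (S.orderIsoOfFin rfl).symm ⟨f i, by simp [hS]⟩,
      fun j => (S.orderIsoOfFin rfl j : Fin n), ?_, ?_, ?_⟩
    · intro j
      have hmem : ((S.orderIsoOfFin rfl j : Fin n)) ∈ Finset.univ.image f :=
        (S.orderIsoOfFin rfl j).2
      obtain ⟨i, -, hi⟩ := Finset.mem_image.mp hmem
      refine ⟨i, ?_⟩
      apply (S.orderIsoOfFin rfl).injective
      rw [OrderIso.apply_symm_apply]
      exact Subtype.ext hi
    · exact fun a b hab => (S.orderIsoOfFin rfl).strictMono hab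
    · funext i
      simp only [OrderIso.apply_symm_apply]

lemma char_fiber {n k : ℕ} {idx : I → Fin k} (f : I → Fin n)
    (hf : levelComp f = List.ofFn (fun j => Finset.univ.filter fun i => idx i = j)) :
    ∃ v : Fin k → Fin n, StrictMono v ∧ ∀ i, f i = v (idx i) := by
  obtain ⟨k', -, idx', h', hs', hm', rfl⟩ := exists_decomp f
  rw [levelComp_comp hm' hs'] at hf
  have e : k' = k := by simpa using congrArg List.length hf
  subst e
  have hfe := List.ofFn_inj.mp hf
  have hidx : idx' = idx := by
    funext i
    have : i ∈ Finset.univ.filter fun i' => idx' i' = idx' i := by simp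
    rw [congrFun hfe (idx' i)] at this
    exact (Finset.mem_filter.mp this).2.symm
  exact ⟨h', hm', fun i => by rw [hidx]⟩

lemma fiber_sum {n k : ℕ} {idx : I → Fin k} (hs : Function.Surjective idx) :
    (∑ f ∈ Finset.univ.filter (fun f : I → Fin n =>
        levelComp f = List.ofFn (fun j => Finset.univ.filter fun i => idx i = j)),
      q ^ ∑ i, (f i : ℕ))
      = Gsum q (fun j => (Finset.univ.filter fun i => idx i = j).card) n := by
  rw [Gsum]
  refine Finset.sum_nbij' (i := fun f => fun j => f (hs j).choose)
    (j := fun g => fun i => g (idx i)) ?_ ?_ ?_ ?_ ?_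
  · intro f hf
    obtain ⟨v, hv, hfv⟩ := char_fiber f (Finset.mem_filter.mp hf).2
    have hrep : (fun j => f (hs j).choose) = v :=
      funext fun j => by rw [hfv, (hs j).choose_spec]
    rw [Finset.mem_filter]
    refine ⟨Finset.mem_univ _, ?_⟩
    show StrictMono (fun j => f (hs j).choose)
    rw [hrep]; exact hv
  · intro g hg
    rw [Finset.mem_filter]
    exact ⟨Finset.mem_univ _, levelComp_comp (Finset.mem_filter.mp hg).2 hs⟩
  · intro f hf
    obtain ⟨v, hv, hfv⟩ := char_fiber f (Finset.mem_filter.mp hf).2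
    show (fun i => (fun j => f (hs j).choose) (idx i)) = f
    funext i
    show f (hs (idx i)).choose = f i
    rw [hfv (hs (idx i)).choose, (hs (idx i)).choose_spec, hfv]
  · intro g hg
    show (fun j => (fun i => g (idx i)) (hs j).choose) = g
    funext j
    show g (idx (hs j).choose) = g j
    rw [(hs j).choose_spec]
  · intro f hf
    obtain ⟨v, hv, hfv⟩ := char_fiber f (Finset.mem_filter.mp hf).2
    congr 1
    have hrep : ∀ j, f (hs j).choose = v j :=
      fun j => by rw [hfv, (hs j).choose_spec]
    calc ∑ i, (f i : ℕ) = ∑ i, (v (idx i) : ℕ) :=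
          Finset.sum_congr rfl fun i _ => by rw [hfv]
      _ = ∑ j : Fin k, ∑ i ∈ Finset.univ.filter fun i => idx i = j, (v (idx i) : ℕ) :=
          (Finset.sum_fiberwise _ _ _).symm
      _ = ∑ j : Fin k, (Finset.univ.filter fun i => idx i = j).card * (v j : ℕ) := by
          refine Finset.sum_congr rfl fun j _ => ?_
          rw [Finset.sum_congr rfl (fun i hi => by
            rw [(Finset.mem_filter.mp hi).2]), Finset.sum_const, smul_eq_mul]
      _ = ∑ j : Fin k, (Finset.univ.filter fun i => idx i = j).card
            * (((fun j => f (hs j).choose) : Fin k → Fin n) j : ℕ) := by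
          refine Finset.sum_congr rfl fun j _ => ?_
          rw [show ((fun j => f (hs j).choose : Fin k → Fin n) j) = v j from hrep j]

end Aux

open scoped Classical in
/-- For any set `𝓕` of set compositions of `I`, the function
`h(n) = Σ_{f : I → Fin n, comp(f) ∈ 𝓕} q^{w(f)}`, where `w(f) = Σ_{i ∈ I} f(i)`, is a
Gaussian polynomial function of degree at most `|I|`. -/
theorem Dfull_levelComp_sum {I : Type*} [Fintype I] [DecidableEq I]
    {R : Type*} [CommRing R] (q : R) (𝓕 : Set (List (Finset I))) :
    Dfull q (Fintype.card I)
      (fun n => ∑ f ∈ Finset.univ.filter (fun f : I → Fin n => levelComp f ∈ 𝓕),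
        q ^ ∑ i, (f i : ℕ)) = 0 := by
  classical
  set A' : Finset (List (Finset I)) :=
    ((Finset.univ : Finset (I → Fin (Fintype.card I))).image levelComp).filter
      (fun C => C ∈ 𝓕) with hA'
  have M1 : ∀ n : ℕ, (∑ f ∈ Finset.univ.filter (fun f : I → Fin n => levelComp f ∈ 𝓕),
      q ^ ∑ i, (f i : ℕ))
      = ∑ C ∈ A', ∑ f ∈ Finset.univ.filter (fun f : I → Fin n => levelComp f = C),
          q ^ ∑ i, (f i : ℕ) := by
    intro n
    refine ((Finset.sum_fiberwise_of_maps_to (g := levelComp) (t := A') ?_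
      (fun f : I → Fin n => q ^ ∑ i, (f i : ℕ))).symm).trans ?_
    swap
    · refine Finset.sum_congr rfl fun C hC => ?_
      have hC𝓕 : C ∈ 𝓕 := (Finset.mem_filter.mp hC).2
      rw [Finset.filter_filter]
      refine Finset.sum_congr (Finset.filter_congr fun f _ => ?_) fun _ _ => rfl
      constructor
      · exact fun h => h.2
      · exact fun h => ⟨h ▸ hC𝓕, h⟩
    · intro f hf
      rw [hA', Finset.mem_filter]
      refine ⟨?_, (Finset.mem_filter.mp hf).2⟩
      obtain ⟨k, hk, idx, h, hsurj, hmono, rfl⟩ := exists_decomp f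
      rw [Finset.mem_image]
      refine ⟨fun i => Fin.castLE hk (idx i), Finset.mem_univ _, ?_⟩
      rw [levelComp_comp (Fin.strictMono_castLE hk) hsurj, levelComp_comp hmono hsurj]
  have hfun : (fun n => ∑ f ∈ Finset.univ.filter (fun f : I → Fin n => levelComp f ∈ 𝓕),
      q ^ ∑ i, (f i : ℕ))
      = fun n => ∑ C ∈ A',
          (fun m => ∑ f ∈ Finset.univ.filter (fun f : I → Fin m => levelComp f = C),
            q ^ ∑ i, (f i : ℕ)) n := funext fun n => M1 n
  rw [hfun, Dfull_sum]
  funext n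
  rw [Pi.zero_apply]
  refine Finset.sum_eq_zero fun C hC => ?_
  obtain ⟨g, -, hg⟩ := Finset.mem_image.mp (Finset.mem_filter.mp hC).1
  obtain ⟨k, hk, idx, h, hsurj, hmono, rfl⟩ := exists_decomp g
  rw [levelComp_comp hmono hsurj] at hg
  subst hg
  have hF : (fun m => ∑ f ∈ Finset.univ.filter (fun f : I → Fin m =>
      levelComp f = List.ofFn (fun j => Finset.univ.filter fun i => idx i = j)),
        q ^ ∑ i, (f i : ℕ))
      = Gsum q (fun j => (Finset.univ.filter fun i => idx i = j).card) :=
    funext fun m => fiber_sum q hsurj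
  have hzero : Dfull q (Fintype.card I)
      (Gsum q fun j => (Finset.univ.filter fun i => idx i = j).card) = 0 := by
    apply Dfull_Gsum
    · intro j
      rw [Nat.one_le_iff_ne_zero, ← Nat.pos_iff_ne_zero, Finset.card_pos]
      obtain ⟨i, hi⟩ := hsurj j
      exact ⟨i, by simp [hi]⟩
    · have : (Finset.univ : Finset I).card
          = ∑ j : Fin k, (Finset.univ.filter fun i => idx i = j).card :=
        Finset.card_eq_sum_card_fiberwise fun i _ => Finset.mem_univ (idx i)
      rw [← Finset.card_univ.symm.trans this]
  rw [hF, hzero]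
  exact rfl
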